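/- Let Σ be a finite alphabet, n : Σ → ℕ a frame defined on all of Σ, and p ∈ PBA_n. Then there exists an (n,p)-uniform string s : {1,…,2^{M_n}} → Σ. -/

import Mathlib

open scoped Classical

/-- A frame on the alphabet `A`: a positive integer value for each character of a nonempty
subset `supp` of `A`. -/
structure Frame (A : Type*) where
  supp : Finset A
  supp_nonempty : supp.Nonempty
  val : A → ℕ
  val_pos : ∀ a ∈ supp, 1 ≤ val a

/-- `M_n = max_{σ ∈ Σ_n} (n σ + 5)`. -/
def Frame.M {A : Type*} (F : Frame A) : ℕ := F.supp.sup fun a => F.val a + 5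

/-- A (partial) string with characters from `A`: a partial function `ℕ → A`, `none` meaning
"not in the domain". -/
def PStr (A : Type*) := ℕ → Option A

/-- The domain of a string. -/
def PStr.dom {A : Type*} (s : PStr A) : Set ℕ := {i | (s i).isSome}

/-- The set of characters appearing in a string. -/
def PStr.chars {A : Type*} (s : PStr A) : Set A := {σ | ∃ i, s i = some σ}

/-- `max_n I = ⌈(max I) / 2^{M_n}⌉` for the domain `I` of the string `s`. -/
noncomputable def PStr.maxn {A : Type*} (F : Frame A) (s : PStr A) : ℕ :=
  (sSup s.dom + 2 ^ F.M - 1) / 2 ^ F.M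

/-- `s[n,k]`: the restriction of the translate of `s` by `−(k−1)·2^{M_n}` to `{1,…,2^{M_n}}`. -/
def PStr.shift {A : Type*} (F : Frame A) (k : ℕ) (s : PStr A) : PStr A :=
  fun i => if 1 ≤ i ∧ i ≤ 2 ^ F.M then s (i + (k - 1) * 2 ^ F.M) else none

/-- `MaxGap(s,σ)` (in `ℕ∞`): the sup of all `m ≥ 1` such that for some `k` with
`k, k+m` in the domain, `σ` does not occur strictly between `k` and `k+m`. -/
noncomputable def PStr.maxGap {A : Type*} (s : PStr A) (σ : A) : ℕ∞ :=
  sSup ((fun m : ℕ => (m : ℕ∞)) ''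
    {m | 1 ≤ m ∧ ∃ k : ℕ, k ∈ s.dom ∧ k + m ∈ s.dom ∧
      ∀ i ∈ s.dom, k < i → i < k + m → s i ≠ some σ})

/-- `MinGap(s,σ)` (in `ℕ∞`): the inf of all `m ≥ 1` with `s k = s (k+m) = σ` for some `k`. -/
noncomputable def PStr.minGap {A : Type*} (s : PStr A) (σ : A) : ℕ∞ :=
  sInf ((fun m : ℕ => (m : ℕ∞)) ''
    {m | 1 ≤ m ∧ ∃ k : ℕ, s k = some σ ∧ s (k + m) = some σ})

/-- `s` is locally `n`-compatible: for every `σ ∈ Σ_n` appearing in `s`,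
`2^{n σ − 1} ≤ MinGap(s,σ) ≤ MaxGap(s,σ) ≤ 2^{n σ}`. -/
def PStr.LocallyCompatible {A : Type*} (F : Frame A) (s : PStr A) : Prop :=
  ∀ σ ∈ F.supp, σ ∈ s.chars →
    (2 ^ (F.val σ - 1) : ℕ∞) ≤ s.minGap σ ∧ s.minGap σ ≤ s.maxGap σ ∧
      s.maxGap σ ≤ (2 ^ F.val σ : ℕ∞)

/-- `s` is `n`-compatible: for every `σ ∈ Σ_n`,
`2^{n σ − 1} ≤ MinGap(s,σ) ≤ MaxGap(s,σ) ≤ 2^{n σ}`. -/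
def PStr.Compatible {A : Type*} (F : Frame A) (s : PStr A) : Prop :=
  ∀ σ ∈ F.supp,
    (2 ^ (F.val σ - 1) : ℕ∞) ≤ s.minGap σ ∧ s.minGap σ ≤ s.maxGap σ ∧
      s.maxGap σ ≤ (2 ^ F.val σ : ℕ∞)

/-- `s ∨ t`: the common extension of strings with disjoint domains. -/
def PStr.join {A : Type*} (s t : PStr A) : PStr A :=
  fun i => (s i).orElse fun _ => t i

/-- The translate `arr s m` of `s` by `m ≥ 0`. -/
def PStr.translate {A : Type*} (m : ℕ) (s : PStr A) : PStr A :=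
  fun i => if m ≤ i then s (i - m) else none

/-- The restriction of `s` to a set of positions. -/
noncomputable def PStr.restrict {A : Type*} (s : PStr A) (I : Set ℕ) : PStr A :=
  fun i => if i ∈ I then s i else none

/-- The `n`-concatenation `s ∧_n t`. -/
noncomputable def PStr.concatN {A : Type*} (F : Frame A) (s t : PStr A) : PStr A :=
  s.join (PStr.translate (s.maxn F * 2 ^ F.M) t)

/-- `s ⋄_n t`: glueing overlapping strings (assuming `s[n,−1] = t[n,+1]`). -/
noncomputable def PStr.diamondN {A : Type*} (F : Frame A) (s t : PStr A) : PStr A :=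
  PStr.concatN F (s.restrict (Set.Icc 1 ((s.maxn F - 1) * 2 ^ F.M))) t

/-- `s →_{n,t} s'`: `t` is a locally `n`-compatible connecting string from `s` to `s'`,
i.e. `Σ_t = Σ_s = Σ_{s'}`, `t[n,+1] = s` and `t[n,−1] = s'`. -/
def PStr.StrArrow {A : Type*} (F : Frame A) (s s' t : PStr A) : Prop :=
  t.chars = s.chars ∧ s.chars = s'.chars ∧ t.LocallyCompatible F ∧
    t.shift F 1 = s ∧ t.shift F (t.maxn F) = s'

/-- `p` is a probability distribution on the finite alphabet `A`. -/
def IsProbDist {A : Type*} [Fintype A] (p : A → ℝ) : Prop :=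
  (∀ σ, 0 ≤ p σ) ∧ ∑ σ, p σ = 1

/-- `x` is one of the two binary values `2 ^ (−n σ)`, `2 ^ (−(n σ − 1))` allowed at `σ`. -/
def BinaryVal {A : Type*} (n : A → ℕ) (σ : A) (x : ℝ) : Prop :=
  x = (2 : ℝ) ^ (-(n σ : ℤ)) ∨ x = (2 : ℝ) ^ (-((n σ : ℤ) - 1))

/-- `Π_n`: probability distributions `p` with `2^(−n σ) ≤ p σ ≤ 2^(−(n σ −1))` for all `σ`. -/
def PiN {A : Type*} [Fintype A] (n : A → ℕ) : Set (A → ℝ) :=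
  {p | IsProbDist p ∧
    ∀ σ, (2 : ℝ) ^ (-(n σ : ℤ)) ≤ p σ ∧ p σ ≤ (2 : ℝ) ^ (-((n σ : ℤ) - 1))}

/-- `PBA_n`: pseudo-binary approximations for the frame `n`. -/
def PBA {A : Type*} [Fintype A] (n : A → ℕ) : Set (A → ℝ) :=
  {p | p ∈ PiN n ∧
    ∀ σ τ : A, ¬ BinaryVal n σ (p σ) → ¬ BinaryVal n τ (p τ) → σ = τ}

/-- `J` is an `N`-saturated arithmetic progression in `{1,…,2^N}` with common difference `D`:
`D = 2^j` for some `j ≤ N`, and `J` consists of all elements of `{1,…,2^N}` congruent to its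
first element `r ∈ {1,…,D}` modulo `D`. -/
def IsSatAP (N : ℕ) (J : Set ℕ) (D : ℕ) : Prop :=
  (∃ j : ℕ, j ≤ N ∧ D = 2 ^ j) ∧
  ∃ r : ℕ, 1 ≤ r ∧ r ≤ D ∧ J = {x | ∃ m : ℕ, m < 2 ^ N / D ∧ x = r + m * D}

/-- `s` is an `(n,p)`-uniform string on `{1,…,2^{M_n}}`: its density function is `p`, and for
every `σ ∈ Σ_n` the occurrence set of `σ` is sandwiched between saturated arithmetic progressions
with common differences `2^{n σ}` and `2^{n σ − 1}`. -/
def PStr.Uniform {A : Type*} [Fintype A] (F : Frame A) (p : A → ℝ) (s : PStr A) : Prop :=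
  s.dom = Set.Icc 1 (2 ^ F.M) ∧
  (∀ σ : A, ({i : ℕ | s i = some σ}.ncard : ℝ) = p σ * 2 ^ F.M) ∧
  ∀ σ ∈ F.supp, ∃ J₁ J₂ : Set ℕ,
    IsSatAP F.M J₁ (2 ^ F.val σ) ∧ IsSatAP F.M J₂ (2 ^ (F.val σ - 1)) ∧
    J₁ ⊆ {i : ℕ | s i = some σ} ∧ {i : ℕ | s i = some σ} ⊆ J₂


namespace UniformAux

/-- Reverse the low `M` bits of a natural number. -/
def brev : ℕ → ℕ → ℕ
  | 0, _ => 0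
  | (M+1), y => brev M (y / 2) + (y % 2) * 2 ^ M

lemma brev_lt (M y : ℕ) : brev M y < 2 ^ M := by
  induction M generalizing y with
  | zero => simp [brev]
  | succ M ih =>
    have h1 := ih (y / 2)
    have h2 : y % 2 ≤ 1 := by omega
    have : (y % 2) * 2 ^ M ≤ 2 ^ M := by
      calc (y % 2) * 2 ^ M ≤ 1 * 2 ^ M := Nat.mul_le_mul_right _ h2
      _ = 2 ^ M := one_mul _
    simp only [brev, pow_succ]
    omega

lemma pow_two_mod_div (y j : ℕ) : y % 2 ^ (j + 1) / 2 = y / 2 % 2 ^ j := by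
  have h : (2:ℕ) ^ (j+1) = 2 * 2 ^ j := by rw [pow_succ]; ring
  rw [h, Nat.mod_mul_right_div_self]

lemma brev_div {M j : ℕ} (hj : j ≤ M) {y : ℕ} (hy : y < 2 ^ M) :
    brev M y / 2 ^ (M - j) = brev j (y % 2 ^ j) := by
  induction M generalizing j y with
  | zero =>
    interval_cases j
    simp [brev]
  | succ M ih =>
    rcases Nat.eq_or_lt_of_le hj with rfl | hjM
    · rw [Nat.sub_self, pow_zero, Nat.div_one, Nat.mod_eq_of_lt hy]
    · cases j with
      | zero =>
        show brev (M+1) y / 2 ^ (M + 1 - 0) = brev 0 (y % 2 ^ 0)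
        rw [Nat.sub_zero, Nat.div_eq_of_lt (brev_lt _ _)]
        rfl
      | succ j =>
        have hj' : j ≤ M := by omega
        have hsub : M + 1 - (j + 1) = M - j := by omega
        have hy2 : y / 2 < 2 ^ M := by
          have : y < 2 ^ M * 2 := by rw [← pow_succ]; exact hy
          omega
        have hMj : 2 ^ M = 2 ^ (M - j) * 2 ^ j := by
          rw [← pow_add]; congr 1; omega
        have key : brev (M+1) y / 2 ^ (M - j)
            = brev M (y / 2) / 2 ^ (M - j) + (y % 2) * 2 ^ j := by
          show (brev M (y / 2) + (y % 2) * 2 ^ M) / 2 ^ (M - j) = _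
          have h' : (y % 2) * 2 ^ M = (y % 2 * 2 ^ j) * 2 ^ (M - j) := by
            rw [hMj]; ring
          rw [h', Nat.add_mul_div_right _ _ (Nat.pow_pos (by norm_num))]
        rw [hsub, key, ih hj' hy2]
        have hmod1 : y % 2 ^ (j + 1) % 2 = y % 2 := Nat.mod_mod_of_dvd y ⟨2 ^ j, by ring⟩
        have hmod2 : y % 2 ^ (j + 1) / 2 = y / 2 % 2 ^ j := pow_two_mod_div y j
        show brev j (y / 2 % 2 ^ j) + y % 2 * 2 ^ j
            = brev j (y % 2 ^ (j+1) / 2) + (y % 2 ^ (j+1) % 2) * 2 ^ j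
        rw [hmod1, hmod2]

lemma brev_snoc {M y : ℕ} (hy : y < 2 ^ (M + 1)) :
    brev (M + 1) y = 2 * brev M (y % 2 ^ M) + y / 2 ^ M := by
  induction M generalizing y with
  | zero =>
    show brev 0 (y / 2) + (y % 2) * 1 = 2 * brev 0 (y % 1) + y / 1
    show 0 + (y % 2) * 1 = 2 * 0 + y / 1
    omega
  | succ M ih =>
    have hy2 : y / 2 < 2 ^ (M + 1) := by
      have : y < 2 ^ (M + 1) * 2 := by rw [← pow_succ]; exact hy
      omega
    have step : brev (M + 2) y = brev (M+1) (y / 2) + (y % 2) * 2 ^ (M + 1) := rfl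
    rw [step, ih hy2]
    have h1 : y / 2 % 2 ^ M = y % 2 ^ (M + 1) / 2 := (pow_two_mod_div y M).symm
    have h2 : y / 2 / 2 ^ M = y / 2 ^ (M + 1) := by
      rw [Nat.div_div_eq_div_mul, ← pow_succ']
    have h3 : y % 2 ^ (M + 1) % 2 = y % 2 := Nat.mod_mod_of_dvd y ⟨2 ^ M, by ring⟩
    show 2 * brev M (y / 2 % 2 ^ M) + y / 2 / 2 ^ M + y % 2 * 2 ^ (M+1)
        = 2 * (brev M (y % 2 ^ (M+1) / 2) + (y % 2 ^ (M+1) % 2) * 2 ^ M) + y / 2 ^ (M+1)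
    rw [h1, h2, h3]
    ring

lemma brev_brev {M y : ℕ} (hy : y < 2 ^ M) : brev M (brev M y) = y := by
  induction M generalizing y with
  | zero => simp [brev]; omega
  | succ M ih =>
    have hy2 : y / 2 < 2 ^ M := by
      have : y < 2 ^ M * 2 := by rw [← pow_succ]; exact hy
      omega
    have hb := brev_lt M (y / 2)
    have hz : brev (M+1) y = brev M (y / 2) + (y % 2) * 2 ^ M := rfl
    have hzlt : brev (M+1) y < 2 ^ (M+1) := brev_lt _ _
    rw [hz, brev_snoc (hz ▸ hzlt)]
    have hmod : (brev M (y / 2) + (y % 2) * 2 ^ M) % 2 ^ M = brev M (y / 2) := by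
      rw [Nat.add_mul_mod_self_right, Nat.mod_eq_of_lt hb]
    have hdiv : (brev M (y / 2) + (y % 2) * 2 ^ M) / 2 ^ M = y % 2 := by
      rw [Nat.add_mul_div_right _ _ (Nat.pow_pos (by norm_num)),
        Nat.div_eq_of_lt hb, Nat.zero_add]
    rw [hmod, hdiv, ih hy2]
    omega

section Alloc

variable {A : Type*} [Fintype A]

/-- Prefix sum of weights `c` over all elements with smaller `key`. -/
noncomputable def pre (c key : A → ℕ) (σ : A) : ℕ :=
  ∑ τ ∈ Finset.univ.filter (fun τ => key τ < key σ), c τ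

lemma pre_add_le (c key : A → ℕ) {σ τ : A} (h : key τ < key σ) :
    pre c key τ + c τ ≤ pre c key σ := by
  classical
  have hnot : τ ∉ Finset.univ.filter (fun υ => key υ < key τ) := by simp
  have hsub : insert τ (Finset.univ.filter fun υ => key υ < key τ)
      ⊆ Finset.univ.filter fun υ => key υ < key σ := by
    intro υ hυ
    rcases Finset.mem_insert.1 hυ with rfl | hυ
    · simp [h]
    · simp only [Finset.mem_filter, Finset.mem_univ, true_and] at hυ ⊢
      omega
  calc pre c key τ + c τ = ∑ υ ∈ insert τ (Finset.univ.filter fun υ => key υ < key τ), c υ := by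
        rw [Finset.sum_insert hnot]; exact add_comm _ _
    _ ≤ pre c key σ := Finset.sum_le_sum_of_subset hsub

lemma pre_add_le_sum (c key : A → ℕ) (σ : A) : pre c key σ + c σ ≤ ∑ τ, c τ := by
  classical
  have hnot : σ ∉ Finset.univ.filter (fun υ => key υ < key σ) := by simp
  calc pre c key σ + c σ = ∑ υ ∈ insert σ (Finset.univ.filter fun υ => key υ < key σ), c υ := by
        rw [Finset.sum_insert hnot]; exact add_comm _ _
    _ ≤ ∑ τ, c τ := Finset.sum_le_sum_of_subset (Finset.subset_univ _)

lemma pre_uniq {c key : A → ℕ} (hkey : Function.Injective key) {y : ℕ} {σ τ : A}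
    (h1 : pre c key σ ≤ y) (h2 : y < pre c key σ + c σ)
    (h3 : pre c key τ ≤ y) (h4 : y < pre c key τ + c τ) : σ = τ := by
  rcases Nat.lt_trichotomy (key σ) (key τ) with h | h | h
  · have := pre_add_le c key h; omega
  · exact hkey h
  · have := pre_add_le c key h; omega

lemma pre_cover {c key : A → ℕ} (hkey : Function.Injective key) {y : ℕ}
    (hy : y < ∑ τ, c τ) : ∃ σ, pre c key σ ≤ y ∧ y < pre c key σ + c σ := by
  classical
  have hdisj : ∀ σ ∈ (Finset.univ : Finset A), ∀ τ ∈ (Finset.univ : Finset A), σ ≠ τ →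
      Disjoint (Finset.Ico (pre c key σ) (pre c key σ + c σ))
        (Finset.Ico (pre c key τ) (pre c key τ + c τ)) := by
    intro σ _ τ _ hne
    rw [Finset.disjoint_left]
    intro z hz1 hz2
    simp only [Finset.mem_Ico] at hz1 hz2
    exact hne (pre_uniq hkey hz1.1 hz1.2 hz2.1 hz2.2)
  have hsubset : (Finset.univ.biUnion fun σ =>
      Finset.Ico (pre c key σ) (pre c key σ + c σ)) ⊆ Finset.range (∑ τ, c τ) := by
    intro z hz
    simp only [Finset.mem_biUnion, Finset.mem_Ico] at hz
    obtain ⟨σ, _, _, h2⟩ := hz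
    exact Finset.mem_range.2 (lt_of_lt_of_le h2 (pre_add_le_sum c key σ))
  have hcard : (Finset.range (∑ τ, c τ)).card ≤
      (Finset.univ.biUnion fun σ => Finset.Ico (pre c key σ) (pre c key σ + c σ)).card := by
    rw [Finset.card_biUnion hdisj, Finset.card_range]
    apply le_of_eq
    simp [Nat.card_Ico]
  have heq := Finset.eq_of_subset_of_card_le hsubset hcard
  have : y ∈ Finset.univ.biUnion fun σ =>
      Finset.Ico (pre c key σ) (pre c key σ + c σ) := by
    rw [heq]; exact Finset.mem_range.2 hy
  simp only [Finset.mem_biUnion, Finset.mem_Ico] at this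
  obtain ⟨σ, _, h⟩ := this
  exact ⟨σ, h⟩

/-- The character occupying position `y` in the prefix-sum decomposition. -/
noncomputable def pick (c key : A → ℕ) (y : ℕ) : Option A :=
  if h : ∃ σ, pre c key σ ≤ y ∧ y < pre c key σ + c σ then some h.choose else none

lemma pick_eq_some {c key : A → ℕ} (hkey : Function.Injective key) {y : ℕ} {σ : A} :
    pick c key y = some σ ↔ pre c key σ ≤ y ∧ y < pre c key σ + c σ := by
  constructor
  · intro h
    unfold pick at h
    split at h
    case isTrue hex =>
      have hc := hex.choose_spec
      have : hex.choose = σ := Option.some.injEq _ _ ▸ h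
      rwa [this] at hc
    case isFalse => exact absurd h (by simp)
  · intro hσ
    have hex : ∃ τ, pre c key τ ≤ y ∧ y < pre c key τ + c τ := ⟨σ, hσ⟩
    unfold pick
    rw [dif_pos hex]
    congr 1
    have hc := hex.choose_spec
    exact pre_uniq hkey hc.1 hc.2 hσ.1 hσ.2

end Alloc

/-- The saturated AP corresponding (under bit reversal) to the `t`-th dyadic interval of
length `2^(M-j)`. -/
def Jset (M j t : ℕ) : Set ℕ :=
  {x | ∃ m : ℕ, m < 2 ^ M / 2 ^ j ∧ x = brev j t + 1 + m * 2 ^ j}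

lemma isSatAP_Jset {M j t : ℕ} (hj : j ≤ M) (ht : t < 2 ^ j) :
    IsSatAP M (Jset M j t) (2 ^ j) :=
  ⟨⟨j, hj, rfl⟩, brev j t + 1, Nat.le_add_left 1 _, brev_lt j t, rfl⟩

lemma mem_Jset_iff {M j t : ℕ} (hj : j ≤ M) (ht : t < 2 ^ j) {x : ℕ} :
    x ∈ Jset M j t ↔ 1 ≤ x ∧ x ≤ 2 ^ M ∧ brev M (x - 1) / 2 ^ (M - j) = t := by
  have hpow : 2 ^ (M - j) * 2 ^ j = 2 ^ M := by rw [← pow_add]; congr 1; omega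
  have hdiv : 2 ^ M / 2 ^ j = 2 ^ (M - j) := Nat.pow_div hj (by norm_num)
  have hbt := brev_lt j t
  constructor
  · rintro ⟨m, hm, rfl⟩
    rw [hdiv] at hm
    have hle : brev j t + 1 + m * 2 ^ j ≤ 2 ^ M := by
      calc brev j t + 1 + m * 2 ^ j ≤ 2 ^ j + m * 2 ^ j := by omega
        _ = (m + 1) * 2 ^ j := by ring
        _ ≤ 2 ^ (M - j) * 2 ^ j := Nat.mul_le_mul_right _ (by omega)
        _ = 2 ^ M := hpow
    refine ⟨by omega, hle, ?_⟩
    have hy : brev j t + 1 + m * 2 ^ j - 1 = brev j t + m * 2 ^ j := by omega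
    rw [hy]
    have hylt : brev j t + m * 2 ^ j < 2 ^ M := by omega
    rw [brev_div hj hylt, Nat.add_mul_mod_self_right, Nat.mod_eq_of_lt hbt, brev_brev ht]
  · rintro ⟨h1, h2, h3⟩
    set y := x - 1 with hy
    have hylt : y < 2 ^ M := by omega
    rw [brev_div hj hylt] at h3
    have hmodlt : y % 2 ^ j < 2 ^ j := Nat.mod_lt _ (Nat.pow_pos (by norm_num))
    have hmod : y % 2 ^ j = brev j t := by
      rw [← brev_brev hmodlt, h3]
    refine ⟨y / 2 ^ j, ?_, ?_⟩
    · rw [hdiv]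
      have : y < 2 ^ (M - j) * 2 ^ j := hpow ▸ hylt
      exact Nat.div_lt_iff_lt_mul (Nat.pow_pos (by norm_num)) |>.2 (by
        rw [Nat.mul_comm] at this ⊢; exact this)
    · have h5 := Nat.div_add_mod y (2 ^ j)
      have h6 : 2 ^ j * (y / 2 ^ j) = y / 2 ^ j * 2 ^ j := Nat.mul_comm _ _
      omega

lemma Jset_subset {M j t a c : ℕ} (hj : j ≤ M) (ht : t < 2 ^ j)
    (h1 : a ≤ t * 2 ^ (M - j)) (h2 : (t + 1) * 2 ^ (M - j) ≤ a + c) :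
    Jset M j t ⊆ {x | 1 ≤ x ∧ x ≤ 2 ^ M ∧ a ≤ brev M (x - 1) ∧ brev M (x - 1) < a + c} := by
  intro x hx
  obtain ⟨hx1, hx2, hx3⟩ := (mem_Jset_iff hj ht).1 hx
  have hd := Nat.div_add_mod (brev M (x - 1)) (2 ^ (M - j))
  have hm := Nat.mod_lt (brev M (x - 1)) (show 0 < 2 ^ (M - j) from Nat.pow_pos (by norm_num))
  rw [hx3] at hd
  have hc1 : 2 ^ (M - j) * t = t * 2 ^ (M - j) := Nat.mul_comm _ _
  have hexp : (t + 1) * 2 ^ (M - j) = t * 2 ^ (M - j) + 2 ^ (M - j) := by ring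
  exact ⟨hx1, hx2, by omega, by omega⟩

lemma subset_Jset {M j t a c : ℕ} (hj : j ≤ M) (ht : t < 2 ^ j)
    (h1 : t * 2 ^ (M - j) ≤ a) (h2 : a + c ≤ (t + 1) * 2 ^ (M - j)) :
    {x | 1 ≤ x ∧ x ≤ 2 ^ M ∧ a ≤ brev M (x - 1) ∧ brev M (x - 1) < a + c} ⊆ Jset M j t := by
  rintro x ⟨hx1, hx2, hx3, hx4⟩
  refine (mem_Jset_iff hj ht).2 ⟨hx1, hx2, ?_⟩
  exact Nat.div_eq_of_lt_le (by omega) (by omega)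

/-- Cast helper: `2^(-n) * 2^M = 2^(M-n)` in `ℝ`. -/
lemma rpow_aux1 {n M : ℕ} (h : n ≤ M) :
    (2:ℝ) ^ (-(n:ℤ)) * 2 ^ M = ((2 ^ (M - n) : ℕ) : ℝ) := by
  push_cast
  rw [← zpow_natCast (2:ℝ) M, ← zpow_natCast (2:ℝ) (M - n),
    ← zpow_add₀ (by norm_num : (2:ℝ) ≠ 0)]
  congr 1
  omega

lemma rpow_aux2 {n M : ℕ} (h1 : 1 ≤ n) (h : n ≤ M) :
    (2:ℝ) ^ (-((n:ℤ) - 1)) * 2 ^ M = ((2 ^ (M - n + 1) : ℕ) : ℝ) := by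
  push_cast
  rw [← zpow_natCast (2:ℝ) M, ← zpow_natCast (2:ℝ) (M - n + 1),
    ← zpow_add₀ (by norm_num : (2:ℝ) ≠ 0)]
  congr 1
  omega

end UniformAux

/-- **Lemma (existence of uniform strings).** For a finite alphabet `A`, a frame `F` defined on
all of `A`, and a pseudo-binary approximation `p ∈ PBA_n`, there exists an `(n,p)`-uniform
string on `{1,…,2^{M_n}}`. -/
theorem exists_uniform_string {A : Type*} [Fintype A] (F : Frame A)
    (hsupp : F.supp = Finset.univ) (p : A → ℝ) (hp : p ∈ PBA F.val) :
    ∃ s : PStr A, s.Uniform F p := by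
  classical
  open UniformAux in
  obtain ⟨⟨⟨hp0, hp1⟩, hpbd⟩, hpba⟩ := hp
  have hmemA : ∀ σ : A, σ ∈ F.supp := by rw [hsupp]; exact fun σ => Finset.mem_univ σ
  have hnM : ∀ σ, F.val σ + 5 ≤ F.M :=
    fun σ => Finset.le_sup (f := fun a => F.val a + 5) (hmemA σ)
  have hn1 : ∀ σ, 1 ≤ F.val σ := fun σ => F.val_pos σ (hmemA σ)
  have hA : Nonempty A := ⟨F.supp_nonempty.choose⟩
  -- the integer counts
  have hbinval : ∀ σ, BinaryVal F.val σ (p σ) →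
      p σ * 2 ^ F.M = ((2 ^ (F.M - F.val σ) : ℕ) : ℝ) ∨
      p σ * 2 ^ F.M = ((2 ^ (F.M - F.val σ + 1) : ℕ) : ℝ) := by
    intro σ hb
    rcases hb with h | h
    · left; rw [h]; exact UniformAux.rpow_aux1 (by have := hnM σ; omega)
    · right; rw [h]; exact UniformAux.rpow_aux2 (hn1 σ) (by have := hnM σ; omega)
  have hex1 : ∀ τ, ∃ k : ℕ, BinaryVal F.val τ (p τ) → ((k : ℝ) = p τ * 2 ^ F.M) := by
    intro τ
    by_cases hb : BinaryVal F.val τ (p τ)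
    · rcases hbinval τ hb with h | h
      · exact ⟨_, fun _ => h.symm⟩
      · exact ⟨_, fun _ => h.symm⟩
    · exact ⟨0, fun h => absurd h hb⟩
  choose c₁ hc₁ using hex1
  have hexall : ∀ σ, ∃ k : ℕ, (k : ℝ) = p σ * 2 ^ F.M := by
    intro σ
    by_cases hb : BinaryVal F.val σ (p σ)
    · exact ⟨c₁ σ, hc₁ σ hb⟩
    · have hothers : ∀ τ, τ ≠ σ → BinaryVal F.val τ (p τ) := by
        intro τ hτ
        by_contra hb'
        exact hτ (hpba τ σ hb' hb)
      have hsum' : ((∑ τ ∈ Finset.univ.erase σ, c₁ τ : ℕ) : ℝ)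
          = ∑ τ ∈ Finset.univ.erase σ, p τ * 2 ^ F.M := by
        push_cast
        exact Finset.sum_congr rfl fun τ hτ =>
          hc₁ τ (hothers τ (Finset.ne_of_mem_erase hτ))
      have htot : (∑ τ ∈ Finset.univ.erase σ, p τ * 2 ^ F.M) + p σ * 2 ^ F.M
          = 2 ^ F.M := by
        rw [Finset.sum_erase_add Finset.univ _ (Finset.mem_univ σ), ← Finset.sum_mul,
          hp1, one_mul]
      have hpos : 0 ≤ p σ * 2 ^ F.M := mul_nonneg (hp0 σ) (by positivity)
      have hK : (∑ τ ∈ Finset.univ.erase σ, c₁ τ) ≤ 2 ^ F.M := by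
        have h2 : ((∑ τ ∈ Finset.univ.erase σ, c₁ τ : ℕ) : ℝ) ≤ ((2 ^ F.M : ℕ) : ℝ) := by
          rw [hsum']
          push_cast
          linarith
        exact_mod_cast h2
      refine ⟨2 ^ F.M - ∑ τ ∈ Finset.univ.erase σ, c₁ τ, ?_⟩
      rw [Nat.cast_sub hK, hsum']
      push_cast
      linarith
  choose c hc using hexall
  have hsum : ∑ τ, c τ = 2 ^ F.M := by
    have h2 : ((∑ τ, c τ : ℕ) : ℝ) = ((2 ^ F.M : ℕ) : ℝ) := by
      push_cast
      calc ∑ τ, ((c τ : ℝ)) = ∑ τ, p τ * 2 ^ F.M := Finset.sum_congr rfl fun τ _ => hc τ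
        _ = (∑ τ, p τ) * 2 ^ F.M := (Finset.sum_mul _ _ _).symm
        _ = 2 ^ F.M := by rw [hp1, one_mul]
    exact_mod_cast h2
  have hclow : ∀ σ, 2 ^ (F.M - F.val σ) ≤ c σ := by
    intro σ
    have h2 : ((2 ^ (F.M - F.val σ) : ℕ) : ℝ) ≤ (c σ : ℝ) := by
      rw [hc σ, ← UniformAux.rpow_aux1 (show F.val σ ≤ F.M by have := hnM σ; omega)]
      exact mul_le_mul_of_nonneg_right (hpbd σ).1 (by positivity)
    exact_mod_cast h2
  have hchigh : ∀ σ, c σ ≤ 2 ^ (F.M - F.val σ + 1) := by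
    intro σ
    have h2 : (c σ : ℝ) ≤ ((2 ^ (F.M - F.val σ + 1) : ℕ) : ℝ) := by
      rw [hc σ, ← UniformAux.rpow_aux2 (hn1 σ) (show F.val σ ≤ F.M by have := hnM σ; omega)]
      exact mul_le_mul_of_nonneg_right (hpbd σ).2 (by positivity)
    exact_mod_cast h2
  have hbinc : ∀ σ, BinaryVal F.val σ (p σ) →
      c σ = 2 ^ (F.M - F.val σ) ∨ c σ = 2 ^ (F.M - F.val σ + 1) := by
    intro σ hb
    rcases hbinval σ hb with h | h
    · left; exact_mod_cast (hc σ).trans h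
    · right; exact_mod_cast (hc σ).trans h
  have hc2M : ∀ σ, c σ ≤ 2 ^ F.M := fun σ =>
    le_trans (hchigh σ) (Nat.pow_le_pow_right (by norm_num)
      (by have := hnM σ; have := hn1 σ; omega))
  -- the ordering key
  set Bn : A → ℕ := fun σ =>
    if BinaryVal F.val σ (p σ) then 2 ^ F.M - c σ else 2 ^ F.M + 1 with hBdef
  have hcard : 0 < Fintype.card A := Fintype.card_pos
  set ι : A → ℕ := fun σ => ((Fintype.equivFin A) σ : ℕ) with hιdef
  have hιlt : ∀ σ, ι σ < Fintype.card A := fun σ => ((Fintype.equivFin A) σ).isLt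
  have hιinj : Function.Injective ι := fun σ τ h =>
    (Fintype.equivFin A).injective (Fin.ext h)
  set key : A → ℕ := fun σ => Bn σ * Fintype.card A + ι σ with hkeydef
  have hkeyinj : Function.Injective key := by
    intro σ τ h
    have e1 : ∀ υ : A, key υ % Fintype.card A = ι υ := by
      intro υ
      show (Bn υ * Fintype.card A + ι υ) % Fintype.card A = ι υ
      rw [Nat.mul_add_mod']
      exact Nat.mod_eq_of_lt (hιlt υ)
    apply hιinj
    rw [← e1 σ, ← e1 τ, h]
  have hkeylt : ∀ {σ τ : A}, Bn τ < Bn σ → key τ < key σ := by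
    intro σ τ h
    have h1 : key τ < (Bn τ + 1) * Fintype.card A := by
      have := hιlt τ
      show Bn τ * Fintype.card A + ι τ < _
      rw [add_mul, one_mul]
      omega
    have h2 : (Bn τ + 1) * Fintype.card A ≤ Bn σ * Fintype.card A :=
      Nat.mul_le_mul_right _ (by omega)
    have h3 : Bn σ * Fintype.card A ≤ key σ := Nat.le_add_right _ _
    omega
  have hkeyB : ∀ {σ τ : A}, key τ < key σ → Bn τ ≤ Bn σ := by
    intro σ τ h
    by_contra h'
    push_neg at h'
    have := hkeylt h'
    omega
  have hdvda : ∀ σ, BinaryVal F.val σ (p σ) → c σ ∣ UniformAux.pre c key σ := by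
    intro σ hb
    apply Finset.dvd_sum
    intro τ hτ
    rw [Finset.mem_filter] at hτ
    have hB := hkeyB hτ.2
    have hBσ : Bn σ = 2 ^ F.M - c σ := if_pos hb
    by_cases hbτ : BinaryVal F.val τ (p τ)
    · have hBτ : Bn τ = 2 ^ F.M - c τ := if_pos hbτ
      have hcc : c σ ≤ c τ := by
        have h1 := hc2M σ; have h2 := hc2M τ
        rw [hBσ, hBτ] at hB
        omega
      obtain ⟨e, he⟩ : ∃ e, c σ = 2 ^ e := by
        rcases hbinc σ hb with h | h
        exacts [⟨_, h⟩, ⟨_, h⟩]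
      obtain ⟨f, hf⟩ : ∃ f, c τ = 2 ^ f := by
        rcases hbinc τ hbτ with h | h
        exacts [⟨_, h⟩, ⟨_, h⟩]
      rw [he, hf] at hcc ⊢
      exact pow_dvd_pow 2 ((Nat.pow_le_pow_iff_right (by norm_num)).1 hcc)
    · have hBτ : Bn τ = 2 ^ F.M + 1 := if_neg hbτ
      have h1 := hc2M σ
      rw [hBσ, hBτ] at hB
      exact absurd hB (by omega)
  have hlast : ∀ σ, ¬ BinaryVal F.val σ (p σ) →
      UniformAux.pre c key σ + c σ = 2 ^ F.M := by
    intro σ hb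
    have hfilter : Finset.univ.filter (fun τ => key τ < key σ) = Finset.univ.erase σ := by
      ext τ
      simp only [Finset.mem_filter, Finset.mem_univ, true_and, Finset.mem_erase, and_true]
      constructor
      · rintro h rfl
        omega
      · intro hne
        have hbτ : BinaryVal F.val τ (p τ) := by
          by_contra hb'
          exact hne (hpba τ σ hb' hb)
        apply hkeylt
        rw [show Bn σ = 2 ^ F.M + 1 from if_neg hb,
          show Bn τ = 2 ^ F.M - c τ from if_pos hbτ]
        omega
    have hpre : UniformAux.pre c key σ = ∑ τ ∈ Finset.univ.erase σ, c τ := by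
      unfold UniformAux.pre
      rw [hfilter]
    rw [hpre, Finset.sum_erase_add _ _ (Finset.mem_univ σ), hsum]
  -- the string
  set s : PStr A := fun x =>
    if 1 ≤ x ∧ x ≤ 2 ^ F.M then UniformAux.pick c key (UniformAux.brev F.M (x - 1))
    else none with hsdef
  have hocc : ∀ σ : A, {x | s x = some σ} =
      {x | 1 ≤ x ∧ x ≤ 2 ^ F.M ∧ UniformAux.pre c key σ ≤ UniformAux.brev F.M (x - 1) ∧
        UniformAux.brev F.M (x - 1) < UniformAux.pre c key σ + c σ} := by
    intro σ
    ext x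
    simp only [Set.mem_setOf_eq, hsdef]
    by_cases h : 1 ≤ x ∧ x ≤ 2 ^ F.M
    · rw [if_pos h, UniformAux.pick_eq_some hkeyinj]
      exact ⟨fun hx => ⟨h.1, h.2, hx.1, hx.2⟩, fun hx => ⟨hx.2.2.1, hx.2.2.2⟩⟩
    · rw [if_neg h]
      constructor
      · intro hx; cases hx
      · intro hx; exact absurd ⟨hx.1, hx.2.1⟩ h
  refine ⟨s, ?_, ?_, ?_⟩
  · -- domain
    ext i
    simp only [PStr.dom, Set.mem_setOf_eq, Set.mem_Icc, hsdef]
    by_cases h : 1 ≤ i ∧ i ≤ 2 ^ F.M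
    · rw [if_pos h]
      obtain ⟨σ, hσ⟩ := UniformAux.pre_cover hkeyinj
        (show UniformAux.brev F.M (i - 1) < ∑ τ, c τ by
          rw [hsum]; exact UniformAux.brev_lt F.M (i - 1))
      rw [(UniformAux.pick_eq_some hkeyinj).2 hσ]
      simp [h.1, h.2]
    · rw [if_neg h]
      simp only [Option.isSome_none, Bool.false_eq_true, false_iff]
      omega
  · -- counts
    intro σ
    rw [← hc σ]
    congr 1
    have hset : {x | s x = some σ} =
        ↑(((Finset.range (2 ^ F.M)).filter
          (fun y => UniformAux.pre c key σ ≤ UniformAux.brev F.M y ∧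
            UniformAux.brev F.M y < UniformAux.pre c key σ + c σ)).image (· + 1)) := by
      rw [hocc σ]
      ext x
      simp only [Finset.coe_image, Set.mem_image, Finset.mem_coe, Finset.mem_filter,
        Finset.mem_range, Set.mem_setOf_eq]
      constructor
      · rintro ⟨h1, h2, h3, h4⟩
        exact ⟨x - 1, ⟨by omega, h3, h4⟩, by omega⟩
      · rintro ⟨y, ⟨hy1, hy2, hy3⟩, rfl⟩
        simpa using ⟨by omega, hy2, hy3⟩
    rw [hset, Set.ncard_coe_finset,
      Finset.card_image_of_injective _ (add_left_injective 1)]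
    have hbij : ((Finset.range (2 ^ F.M)).filter
          (fun y => UniformAux.pre c key σ ≤ UniformAux.brev F.M y ∧
            UniformAux.brev F.M y < UniformAux.pre c key σ + c σ)).card
        = (Finset.Ico (UniformAux.pre c key σ) (UniformAux.pre c key σ + c σ)).card := by
      apply Finset.card_bij (fun y _ => UniformAux.brev F.M y)
      · intro y hy
        rw [Finset.mem_filter] at hy
        exact Finset.mem_Ico.2 ⟨hy.2.1, hy.2.2⟩
      · intro y₁ hy₁ y₂ hy₂ h
        rw [Finset.mem_filter, Finset.mem_range] at hy₁ hy₂
        rw [← UniformAux.brev_brev hy₁.1, ← UniformAux.brev_brev hy₂.1, h]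
      · intro z hz
        rw [Finset.mem_Ico] at hz
        have hzlt : z < 2 ^ F.M :=
          lt_of_lt_of_le hz.2 (hsum ▸ UniformAux.pre_add_le_sum c key σ)
        refine ⟨UniformAux.brev F.M z, ?_, UniformAux.brev_brev hzlt⟩
        rw [Finset.mem_filter, Finset.mem_range, UniformAux.brev_brev hzlt]
        exact ⟨UniformAux.brev_lt _ _, hz.1, hz.2⟩
    rw [hbij, Nat.card_Ico]
    push_cast
    ring_nf
    omega
  · -- the sandwich
    intro σ hσ
    have hj1 : 1 ≤ F.val σ := hn1 σ
    have hjM : F.val σ + 5 ≤ F.M := hnM σ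
    have hj1M : F.val σ - 1 ≤ F.M := by omega
    have hjMle : F.val σ ≤ F.M := by omega
    have hsub1 : F.M - (F.val σ - 1) = F.M - F.val σ + 1 := by omega
    set j := F.val σ with hjdef
    set L : ℕ := 2 ^ (F.M - j) with hLdef
    set a : ℕ := UniformAux.pre c key σ with hadef
    have hLpos : 0 < L := Nat.pow_pos (by norm_num)
    have hpow1 : 2 ^ j * L = 2 ^ F.M := by rw [hLdef, ← pow_add]; congr 1; omega
    have hpowsucc : 2 ^ (F.M - j + 1) = L * 2 := by rw [hLdef, pow_succ]
    have hpow2 : 2 ^ (j - 1) * (L * 2) = 2 ^ F.M := by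
      rw [hLdef, ← hpowsucc, ← pow_add]; congr 1; omega
    have habc : a + c σ ≤ 2 ^ F.M := hsum ▸ UniformAux.pre_add_le_sum c key σ
    have hlow : L ≤ c σ := hclow σ
    have hhigh : c σ ≤ L * 2 := hpowsucc ▸ hchigh σ
    rw [hocc σ]
    by_cases hb : BinaryVal F.val σ (p σ)
    · rcases hbinc σ hb with hcase | hcase
      · -- c σ = L
        have hcL : c σ = L := hcase
        have hdv : L ∣ a := by rw [← hcL]; exact hdvda σ hb
        have halt : a < 2 ^ F.M := by omega
        have ht1 : a / L < 2 ^ j := by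
          rw [Nat.div_lt_iff_lt_mul hLpos, hpow1]
          exact halt
        have ht2 : a / (L * 2) < 2 ^ (j - 1) := by
          rw [Nat.div_lt_iff_lt_mul (by omega), hpow2]
          exact halt
        have hmul : a / L * L = a := Nat.div_mul_cancel hdv
        obtain ⟨k, hk⟩ := hdv
        have hq : a / (L * 2) = k / 2 := by rw [hk, Nat.mul_div_mul_left _ _ hLpos]
        refine ⟨UniformAux.Jset F.M j (a / L),
          UniformAux.Jset F.M (j - 1) (a / (L * 2)), ?_, ?_, ?_, ?_⟩
        · exact UniformAux.isSatAP_Jset hjMle ht1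
        · exact UniformAux.isSatAP_Jset hj1M ht2
        · apply UniformAux.Jset_subset hjMle ht1
          · rw [← hLdef, hmul]
          · rw [← hLdef, add_mul, one_mul, hmul]
            omega
        · have h1 : a / (L * 2) * 2 ^ (F.M - (j - 1)) ≤ a := by
            rw [hsub1, hpowsucc]
            exact Nat.div_mul_le_self _ _
          have h2 : a + c σ ≤ (a / (L * 2) + 1) * 2 ^ (F.M - (j - 1)) := by
            rw [hsub1, hpowsucc, hq, hk, hcL]
            have hk2 := Nat.div_add_mod k 2
            have hk3 : k % 2 ≤ 1 := by omega
            calc L * k + L = (k + 1) * L := by ring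
              _ ≤ (k / 2 * 2 + 2) * L := Nat.mul_le_mul_right _ (by omega)
              _ = (k / 2 + 1) * (L * 2) := by ring
          exact UniformAux.subset_Jset hj1M ht2 h1 h2
      · -- c σ = L * 2
        have hcL : c σ = L * 2 := by rw [hcase, hpowsucc]
        have hdv2 : L * 2 ∣ a := by rw [← hcL]; exact hdvda σ hb
        have hdv : L ∣ a := dvd_trans ⟨2, rfl⟩ hdv2
        have halt : a < 2 ^ F.M := by omega
        have ht1 : a / L < 2 ^ j := by
          rw [Nat.div_lt_iff_lt_mul hLpos, hpow1]
          exact halt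
        have ht2 : a / (L * 2) < 2 ^ (j - 1) := by
          rw [Nat.div_lt_iff_lt_mul (by omega), hpow2]
          exact halt
        have hmul : a / L * L = a := Nat.div_mul_cancel hdv
        have hmul2 : a / (L * 2) * (L * 2) = a := Nat.div_mul_cancel hdv2
        refine ⟨UniformAux.Jset F.M j (a / L),
          UniformAux.Jset F.M (j - 1) (a / (L * 2)), ?_, ?_, ?_, ?_⟩
        · exact UniformAux.isSatAP_Jset hjMle ht1
        · exact UniformAux.isSatAP_Jset hj1M ht2
        · apply UniformAux.Jset_subset hjMle ht1
          · rw [← hLdef, hmul]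
          · rw [← hLdef, add_mul, one_mul, hmul]
            omega
        · have h1 : a / (L * 2) * 2 ^ (F.M - (j - 1)) ≤ a := by
            rw [hsub1, hpowsucc, hmul2]
          have h2 : a + c σ ≤ (a / (L * 2) + 1) * 2 ^ (F.M - (j - 1)) := by
            rw [hsub1, hpowsucc, add_mul, one_mul, hmul2, hcL]
          exact UniformAux.subset_Jset hj1M ht2 h1 h2
    · -- exceptional character
      have hE : a + c σ = 2 ^ F.M := hlast σ hb
      have hj2pos : 0 < 2 ^ j := Nat.pow_pos (by norm_num)
      have hj2pos' : 0 < 2 ^ (j - 1) := Nat.pow_pos (by norm_num)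
      have ht1 : 2 ^ j - 1 < 2 ^ j := by omega
      have ht2 : 2 ^ (j - 1) - 1 < 2 ^ (j - 1) := by omega
      refine ⟨UniformAux.Jset F.M j (2 ^ j - 1),
        UniformAux.Jset F.M (j - 1) (2 ^ (j - 1) - 1), ?_, ?_, ?_, ?_⟩
      · exact UniformAux.isSatAP_Jset hjMle ht1
      · exact UniformAux.isSatAP_Jset hj1M ht2
      · apply UniformAux.Jset_subset hjMle ht1
        · rw [← hLdef, Nat.sub_mul, one_mul, hpow1]
          omega
        · rw [← hLdef, Nat.sub_add_cancel (by omega), hpow1]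
          omega
      · have hLL : 2 ^ (F.M - (j - 1)) = L * 2 := by rw [hsub1, hpowsucc]
        have h1 : (2 ^ (j - 1) - 1) * 2 ^ (F.M - (j - 1)) ≤ a := by
          rw [hLL, Nat.sub_mul, one_mul, hpow2]
          omega
        have h2 : a + c σ ≤ (2 ^ (j - 1) - 1 + 1) * 2 ^ (F.M - (j - 1)) := by
          rw [hLL, Nat.sub_add_cancel (by omega), hpow2]
          omega
        exact UniformAux.subset_Jset hj1M ht2 h1 h2
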